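/- Let ℓ be an odd prime and H = ℤ_ℓ ⋊ ℤ_ℓ^× (with ℤ_ℓ^× acting on ℤ_ℓ by multiplication). Assume an element (a, u) ∈ H acts on ℤ/ℓⁿℤ by x ↦ a + ux (mod ℓⁿ). The proportion (Haar measure) of elements of H that fix some point of ℤ/ℓⁿℤ for every n, equivalently the density ∫_{ℤ_ℓ^×} ℓ^{-v_ℓ(u-1)} dμ(u), equals (ℓ² - ℓ - 1)/(ℓ² - 1). -/

import Mathlib

open MeasureTheory ENNReal

section Aux

variable {G K : Type*} [Group G] [MeasurableSpace G] [MeasurableMul G]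
  [Group K] [Fintype K]

/-- A finite-index kernel has measure `1 / index` for any left-invariant probability measure. -/
lemma meas_ker_eq (μ : Measure G) [μ.IsMulLeftInvariant] (hμ : μ Set.univ = 1)
    (φ : G →* K) (hsurj : Function.Surjective φ)
    (hmeas : MeasurableSet (φ ⁻¹' {1})) :
    μ (φ ⁻¹' {1}) = (Fintype.card K : ℝ≥0∞)⁻¹ := by
  have fib : ∀ t : K, μ (φ ⁻¹' {t}) = μ (φ ⁻¹' {1}) ∧ MeasurableSet (φ ⁻¹' {t}) := by
    intro t
    obtain ⟨g, hg⟩ := hsurj t⁻¹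
    have he : φ ⁻¹' {t} = (fun h => g * h) ⁻¹' (φ ⁻¹' {1}) := by
      ext u
      simp only [Set.mem_preimage, Set.mem_singleton_iff, map_mul, hg]
      rw [inv_mul_eq_one]
      exact comm
    constructor
    · rw [he, measure_preimage_mul]
    · rw [he]
      exact hmeas.preimage (measurable_const_mul g)
  have hcover : (⋃ t : K, φ ⁻¹' {t}) = Set.univ := by
    ext u; simp
  have hdisj : Pairwise (Function.onFun Disjoint fun t : K => φ ⁻¹' {t}) := by
    intro s t hst
    refine Set.disjoint_left.2 fun u hus hut => hst ?_
    simp only [Set.mem_preimage, Set.mem_singleton_iff] at hus hut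
    rw [← hus, ← hut]
  have key : (1 : ℝ≥0∞) = (Fintype.card K : ℝ≥0∞) * μ (φ ⁻¹' {1}) := by
    calc (1 : ℝ≥0∞) = μ Set.univ := hμ.symm
      _ = μ (⋃ t : K, φ ⁻¹' {t}) := by rw [hcover]
      _ = ∑' t : K, μ (φ ⁻¹' {t}) := measure_iUnion hdisj fun t => (fib t).2
      _ = ∑' _ : K, μ (φ ⁻¹' {1}) := by exact tsum_congr fun t => (fib t).1
      _ = (Fintype.card K : ℝ≥0∞) * μ (φ ⁻¹' {1}) := by
          rw [tsum_fintype, Finset.sum_const, Finset.card_univ, nsmul_eq_mul]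
  have hcard : (Fintype.card K : ℝ≥0∞) ≠ 0 := by
    exact_mod_cast (Nat.cast_ne_zero (R := ℝ≥0∞)).2 Fintype.card_ne_zero
  have hcardtop : (Fintype.card K : ℝ≥0∞) ≠ ⊤ := ENNReal.natCast_ne_top _
  calc μ (φ ⁻¹' {1}) = (Fintype.card K : ℝ≥0∞)⁻¹ * ((Fintype.card K : ℝ≥0∞) * μ (φ ⁻¹' {1})) := by
        rw [← mul_assoc, ENNReal.inv_mul_cancel hcard hcardtop, one_mul]
    _ = (Fintype.card K : ℝ≥0∞)⁻¹ := by rw [← key, mul_one]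

end Aux

section Padic

variable (ℓ : ℕ) [hp : Fact ℓ.Prime]

lemma mem_ball_iff (k : ℕ) (u : ℤ_[ℓ]ˣ) :
    ‖(u : ℤ_[ℓ]) - 1‖ ≤ (ℓ : ℝ) ^ (-(k : ℤ)) ↔
      Units.map (PadicInt.toZModPow (p := ℓ) k).toMonoidHom u = 1 := by
  rw [PadicInt.norm_le_pow_iff_mem_span_pow, ← PadicInt.ker_toZModPow, RingHom.mem_ker,
    map_sub, map_one, sub_eq_zero, Units.ext_iff]
  simp [Units.coe_map, MonoidHom.coe_coe, eq_comm]

lemma units_map_surj (k : ℕ) :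
    Function.Surjective (Units.map (PadicInt.toZModPow (p := ℓ) k).toMonoidHom) := by
  haveI : NeZero (ℓ ^ k) := ⟨pow_ne_zero _ hp.out.ne_zero⟩
  intro t
  rcases Nat.eq_zero_or_pos k with hk | hk
  · subst hk
    haveI : Subsingleton (ZMod (ℓ ^ 0)) := by rw [pow_zero ℓ]; infer_instance
    exact ⟨1, Units.ext (Subsingleton.elim _ _)⟩
  · have hx : PadicInt.toZModPow (p := ℓ) k (((t : ZMod (ℓ ^ k)).val : ℕ) : ℤ_[ℓ])
        = (t : ZMod (ℓ ^ k)) := by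
      rw [map_natCast, ZMod.natCast_zmod_val]
    set x : ℤ_[ℓ] := (((t : ZMod (ℓ ^ k)).val : ℕ) : ℤ_[ℓ]) with hxdef
    have hux : IsUnit x := by
      rw [PadicInt.isUnit_iff]
      by_contra hne
      have hlt : ‖x‖ < 1 := lt_of_le_of_ne (PadicInt.norm_le_one x) hne
      obtain ⟨y, hy⟩ := (PadicInt.norm_lt_one_iff_dvd x).1 hlt
      have : IsUnit ((ℓ : ZMod (ℓ ^ k))) := by
        have ht : IsUnit ((t : ZMod (ℓ ^ k))) := t.isUnit
        rw [← hx, hy, map_mul, map_natCast] at ht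
        exact isUnit_of_mul_isUnit_left ht
      rw [ZMod.isUnit_iff_coprime] at this
      exact hp.out.ne_one (this.eq_one_of_dvd (dvd_pow_self ℓ hk.ne'))
    obtain ⟨v, hv⟩ := hux
    refine ⟨v, Units.ext ?_⟩
    show PadicInt.toZModPow (p := ℓ) k (v : ℤ_[ℓ]) = (t : ZMod (ℓ ^ k))
    rw [hv, hx]

variable [MeasurableSpace ℤ_[ℓ]ˣ] [BorelSpace ℤ_[ℓ]ˣ]

lemma ball_measurable (c : ℝ) :
    MeasurableSet {u : ℤ_[ℓ]ˣ | ‖(u : ℤ_[ℓ]) - 1‖ ≤ c} := by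
  have hcont : Continuous fun u : ℤ_[ℓ]ˣ => ‖(u : ℤ_[ℓ]) - 1‖ :=
    (Units.continuous_val.sub continuous_const).norm
  exact (isClosed_le hcont continuous_const).measurableSet

lemma meas_ball (μ : Measure ℤ_[ℓ]ˣ) [μ.IsMulLeftInvariant] (hμ : μ Set.univ = 1) (k : ℕ) :
    μ {u : ℤ_[ℓ]ˣ | ‖(u : ℤ_[ℓ]) - 1‖ ≤ (ℓ : ℝ) ^ (-(k : ℤ))} = ((ℓ ^ k).totient : ℝ≥0∞)⁻¹ := by
  haveI : NeZero (ℓ ^ k) := ⟨pow_ne_zero _ hp.out.ne_zero⟩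
  have hset : {u : ℤ_[ℓ]ˣ | ‖(u : ℤ_[ℓ]) - 1‖ ≤ (ℓ : ℝ) ^ (-(k : ℤ))}
      = (Units.map (PadicInt.toZModPow (p := ℓ) k).toMonoidHom) ⁻¹' {1} := by
    ext u; simpa using mem_ball_iff ℓ k u
  have := meas_ker_eq μ hμ (Units.map (PadicInt.toZModPow (p := ℓ) k).toMonoidHom)
    (units_map_surj ℓ k) (by rw [← hset]; exact ball_measurable ℓ _)
  rw [hset, this, ZMod.card_units_eq_totient]

end Padic

/-- Let `ℓ` be an odd prime and `H = ℤ_ℓ ⋊ ℤ_ℓ^×`.  The density of elements of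
`H` fixing a point of `ℤ/ℓⁿℤ` for every `n`, namely the integral over `ℤ_ℓ^×`
of `u ↦ ℓ^{-v_ℓ(u-1)}` (equivalently `‖u - 1‖`, with `ℓ^{-v_ℓ(0)} := 0`)
against the normalized Haar measure, equals `(ℓ² - ℓ - 1)/(ℓ² - 1)`. -/
theorem density_fixed_point_torus (ℓ : ℕ) [Fact ℓ.Prime] (hodd : ℓ ≠ 2)
    [MeasurableSpace ℤ_[ℓ]ˣ] [BorelSpace ℤ_[ℓ]ˣ]
    (μ : Measure ℤ_[ℓ]ˣ) [μ.IsMulLeftInvariant] (hμ : μ Set.univ = 1) :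
    ∫ u : ℤ_[ℓ]ˣ, ‖(u : ℤ_[ℓ]) - 1‖ ∂μ
      = ((ℓ : ℝ) ^ 2 - ℓ - 1) / ((ℓ : ℝ) ^ 2 - 1) := by
  haveI : IsProbabilityMeasure μ := ⟨hμ⟩
  have hp : Fact ℓ.Prime := ‹_›
  have hℓ2 : 2 ≤ ℓ := hp.out.two_le
  set x : ℝ := (ℓ : ℝ) with hxdef
  have hx1 : (1 : ℝ) < x := by rw [hxdef]; exact_mod_cast (by omega : 1 < ℓ)
  have hx0 : x ≠ 0 := by positivity
  set B : ℕ → Set ℤ_[ℓ]ˣ := fun k => {u : ℤ_[ℓ]ˣ | ‖(u : ℤ_[ℓ]) - 1‖ ≤ (ℓ : ℝ) ^ (-(k : ℤ))}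
    with hB
  set A : ℕ → Set ℤ_[ℓ]ˣ := fun k => B k \ B (k + 1) with hA
  have hBmeas : ∀ k, MeasurableSet (B k) := fun k => ball_measurable ℓ _
  have hBmono : ∀ k, B (k + 1) ⊆ B k := by
    intro k u hu
    simp only [hB, Set.mem_setOf_eq] at hu ⊢
    refine le_trans hu ?_
    gcongr
    · exact hx1.le
    · omega
  have hBval : ∀ k, (μ (B k)).toReal = (((ℓ ^ k).totient : ℝ))⁻¹ := by
    intro k
    simp only [hB]
    rw [meas_ball ℓ μ hμ k, ENNReal.toReal_inv]
    simp
  have hAmeas : ∀ k, MeasurableSet (A k) := fun k => (hBmeas k).diff (hBmeas (k + 1))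
  have hBantitone : Antitone B := antitone_nat_of_succ_le hBmono
  have hkey : ∀ j k, j < k → Disjoint (A j) (A k) := by
    intro j k h
    refine Set.disjoint_left.2 fun u huj huk => huj.2 ?_
    exact hBantitone (by omega : j + 1 ≤ k) huk.1
  have hdisj : Pairwise (Function.onFun Disjoint A) := by
    intro j k hjk
    rcases hjk.lt_or_gt with h | h
    · exact hkey j k h
    · exact (hkey k j h).symm
  have hf_cont : Continuous fun u : ℤ_[ℓ]ˣ => ‖(u : ℤ_[ℓ]) - 1‖ :=
    (Units.continuous_val.sub continuous_const).norm
  have hf_int : Integrable (fun u : ℤ_[ℓ]ˣ => ‖(u : ℤ_[ℓ]) - 1‖) μ := by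
    refine (integrable_const (1 : ℝ)).mono' hf_cont.aestronglyMeasurable ?_
    refine Filter.Eventually.of_forall fun u => ?_
    rw [norm_norm]
    exact PadicInt.norm_le_one _
  have hcover : ∀ u : ℤ_[ℓ]ˣ, u ∉ ⋃ k, A k → ‖(u : ℤ_[ℓ]) - 1‖ = 0 := by
    intro u hu
    by_contra hne
    have hpos : 0 < ‖(u : ℤ_[ℓ]) - 1‖ := lt_of_le_of_ne (norm_nonneg _) (Ne.symm hne)
    have hex : ∃ m : ℕ, (ℓ : ℝ) ^ (-(m : ℤ)) < ‖(u : ℤ_[ℓ]) - 1‖ := by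
      obtain ⟨m, hm⟩ := exists_pow_lt_of_lt_one hpos
        (by rw [inv_lt_one₀ (by positivity)]; exact hx1)
      exact ⟨m, by rwa [zpow_neg, zpow_natCast, ← inv_pow]⟩
    set m := Nat.find hex with hm
    have hspec : (ℓ : ℝ) ^ (-(m : ℤ)) < ‖(u : ℤ_[ℓ]) - 1‖ := Nat.find_spec hex
    have hm0 : m ≠ 0 := by
      intro h0
      rw [h0] at hspec
      simp only [Nat.cast_zero, neg_zero, zpow_zero] at hspec
      exact absurd (PadicInt.norm_le_one _) (not_le.2 hspec)
    have hmem : u ∈ A (m - 1) := by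
      constructor
      · have := Nat.find_min hex (show m - 1 < m by omega)
        push_neg at this
        exact this
      · intro hc
        have : (m - 1) + 1 = m := by omega
        rw [this] at hc
        exact absurd hc (not_le.2 hspec)
    exact hu (Set.mem_iUnion.2 ⟨m - 1, hmem⟩)
  have hconst : ∀ k : ℕ, Set.EqOn (fun u : ℤ_[ℓ]ˣ => ‖(u : ℤ_[ℓ]) - 1‖)
      (fun _ => x ^ (-(k : ℤ))) (A k) := by
    intro k u hu
    refine le_antisymm hu.1 ?_
    by_contra hlt
    push_neg at hlt
    refine hu.2 ?_
    have h1 := (PadicInt.norm_lt_pow_iff_norm_le_pow_sub_one ((u : ℤ_[ℓ]) - 1) (-(k : ℤ))).1 hlt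
    have h2 : (-(k : ℤ) - 1) = -((k + 1 : ℕ) : ℤ) := by push_cast; ring
    rw [h2] at h1
    exact h1
  have hpiece : ∀ k : ℕ, ∫ u in A k, ‖(u : ℤ_[ℓ]) - 1‖ ∂μ
      = x ^ (-(k : ℤ)) * ((μ (B k)).toReal - (μ (B (k + 1))).toReal) := by
    intro k
    rw [setIntegral_congr_fun (hAmeas k) (hconst k), setIntegral_const, smul_eq_mul, mul_comm]
    congr 1
    rw [hA]
    simp only [measureReal_def]
    rw [measure_diff (hBmono k) (hBmeas (k + 1)).nullMeasurableSet (measure_ne_top μ _),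
      ENNReal.toReal_sub_of_le (measure_mono (hBmono k)) (measure_ne_top μ _)]
  have hstep1 : ∫ u : ℤ_[ℓ]ˣ, ‖(u : ℤ_[ℓ]) - 1‖ ∂μ
      = ∑' k : ℕ, ∫ u in A k, ‖(u : ℤ_[ℓ]) - 1‖ ∂μ := by
    rw [← setIntegral_eq_integral_of_forall_compl_eq_zero hcover]
    exact integral_iUnion hAmeas hdisj hf_int.integrableOn
  -- values of the measures
  have hℓ1 : 1 ≤ ℓ := by omega
  have hb0 : (μ (B 0)).toReal = 1 := by
    rw [hBval 0, pow_zero, Nat.totient_one]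
    norm_num
  have hbsucc : ∀ k : ℕ, (μ (B (k + 1))).toReal = (x ^ k * (x - 1))⁻¹ := by
    intro k
    rw [hBval (k + 1), Nat.totient_prime_pow hp.out k.succ_pos]
    congr 1
    push_cast [Nat.cast_sub hℓ1]
    simp [hxdef]
  have hx1' : x - 1 ≠ 0 := by
    have : (0 : ℝ) < x - 1 := by linarith
    exact this.ne'
  set r : ℝ := (x ^ 2)⁻¹ with hrdef
  have hr0 : 0 ≤ r := by positivity
  have hr1 : r < 1 := by
    rw [hrdef, inv_lt_one₀ (by positivity)]
    nlinarith
  set t : ℕ → ℝ := fun k => x ^ (-(k : ℤ)) * ((μ (B k)).toReal - (μ (B (k + 1))).toReal)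
    with ht
  have ht0 : t 0 = 1 - (x - 1)⁻¹ := by
    simp only [ht, hb0, hbsucc 0]
    norm_num
  have htsucc : ∀ k : ℕ, t (k + 1) = r ^ (k + 1) := by
    intro k
    simp only [ht, hbsucc k, hbsucc (k + 1), hrdef]
    rw [zpow_neg, zpow_natCast, inv_pow]
    field_simp
    ring
  have hsummand : (fun k : ℕ => t (k + 1)) = fun k : ℕ => r * r ^ k := by
    funext k
    rw [htsucc k, pow_succ']
  have hsum : Summable t := by
    rw [← summable_nat_add_iff 1]
    rw [hsummand]
    exact (summable_geometric_of_lt_one hr0 hr1).mul_left r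
  rw [hstep1]
  have : (∑' k : ℕ, ∫ u in A k, ‖(u : ℤ_[ℓ]) - 1‖ ∂μ) = ∑' k, t k :=
    tsum_congr fun k => hpiece k
  rw [this, Summable.tsum_eq_zero_add hsum, ht0]
  have : (∑' k : ℕ, t (k + 1)) = r * (1 - r)⁻¹ := by
    rw [hsummand, tsum_mul_left, tsum_geometric_of_lt_one hr0 hr1]
  rw [this]
  have hr1' : 1 - r ≠ 0 := by
    have : 0 < 1 - r := by linarith
    exact this.ne'
  have hx21 : x ^ 2 - 1 ≠ 0 := by nlinarith
  rw [hrdef]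
  field_simp
  ring
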